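/- Let φ : ℝⁿ → ℝ be twice continuously differentiable and σ-strongly convex for some σ > 0, let f : ℝⁿ → ℝ be continuously differentiable, let g : ℝⁿ → ℝ be convex, and set Ψ := f + g. Assume the pair (f, φ) is L-smad on ℝⁿ for some L > 0. Fix x ∈ ℝⁿ, λ > 0, α ∈ (0, 1), let d ∈ ℝⁿ be a minimizer of u ↦ ⟨∇f(x), u⟩ + g(x + u) + (1/(2λ))⟨∇²φ(x)u, u⟩ over ℝⁿ, and let β > 0 satisfy ⟨∇²φ(x + s·d)d, d⟩ ≤ β⟨∇²φ(x)d, d⟩ for all s ∈ [0, 1]. Then for every t with 0 < t ≤ min{1, (1 − α)/(βλL)}, the sufficient decrease condition holds: Ψ(x + t·d) ≤ Ψ(x) + α t (⟨∇f(x), d⟩ + g(x + d) − g(x)). -/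

import Mathlib

open scoped RealInnerProductSpace

/-- Hessian–vector product `∇²φ(x) d`. -/
noncomputable def hessApply {n : ℕ} (φ : EuclideanSpace ℝ (Fin n) → ℝ)
    (x d : EuclideanSpace ℝ (Fin n)) : EuclideanSpace ℝ (Fin n) :=
  fderiv ℝ (gradient φ) x d

section Aux

variable {n : ℕ}

private lemma grad_inner_eq (h : EuclideanSpace ℝ (Fin n) → ℝ)
    (y v : EuclideanSpace ℝ (Fin n)) : ⟪gradient h y, v⟫ = fderiv ℝ h y v := by
  show ⟪(InnerProductSpace.toDual ℝ _).symm (fderiv ℝ h y), v⟫ = fderiv ℝ h y v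
  exact InnerProductSpace.toDual_symm_apply

private lemma line_hasDerivAt (x d : EuclideanSpace ℝ (Fin n)) (s : ℝ) :
    HasDerivAt (fun s : ℝ => x + s • d) d s := by
  simpa using ((hasDerivAt_id s).smul_const d).const_add x

private lemma line_deriv1 (h : EuclideanSpace ℝ (Fin n) → ℝ) (hh : Differentiable ℝ h)
    (x d : EuclideanSpace ℝ (Fin n)) (s : ℝ) :
    HasDerivAt (fun s : ℝ => h (x + s • d)) ⟪gradient h (x + s • d), d⟫ s := by
  have h1 := (hh (x + s • d)).hasFDerivAt.comp_hasDerivAt s (line_hasDerivAt x d s)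
  rw [grad_inner_eq]
  exact h1

private lemma grad_contDiff (φ : EuclideanSpace ℝ (Fin n) → ℝ) (hφ : ContDiff ℝ 2 φ) :
    ContDiff ℝ 1 (gradient φ) := by
  have h1 : ContDiff ℝ 1 (fderiv ℝ φ) := hφ.fderiv_right (by norm_num)
  exact (InnerProductSpace.toDual ℝ _).symm.contDiff.comp h1

private lemma line_deriv2 (φ : EuclideanSpace ℝ (Fin n) → ℝ) (hφ : ContDiff ℝ 2 φ)
    (x d : EuclideanSpace ℝ (Fin n)) (s : ℝ) :
    HasDerivAt (fun s : ℝ => ⟪gradient φ (x + s • d), d⟫)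
      ⟪hessApply φ (x + s • d) d, d⟫ s := by
  have hg := grad_contDiff φ hφ
  have hw : HasDerivAt (fun s : ℝ => gradient φ (x + s • d))
      (hessApply φ (x + s • d) d) s := by
    have := ((hg.differentiable (by norm_num)) (x + s • d)).hasFDerivAt.comp_hasDerivAt s
      (line_hasDerivAt x d s)
    exact this
  have := hw.inner ℝ (hasDerivAt_const s d)
  simpa using this

private lemma line_convex (h : EuclideanSpace ℝ (Fin n) → ℝ)
    (hh : ConvexOn ℝ Set.univ h) (x d : EuclideanSpace ℝ (Fin n)) :
    ConvexOn ℝ Set.univ (fun s : ℝ => h (x + s • d)) := by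
  refine ⟨convex_univ, fun s _ r _ a b ha hb hab => ?_⟩
  have key : x + (a • s + b • r) • d = a • (x + s • d) + b • (x + r • d) := by
    rw [smul_add, smul_add, add_add_add_comm, ← add_smul, hab, one_smul,
      smul_smul, smul_smul, ← add_smul]
    simp [smul_eq_mul]
  simp only [key]
  exact hh.2 (Set.mem_univ _) (Set.mem_univ _) ha hb hab

private lemma deriv_nonneg_of_monotone {h : ℝ → ℝ} (hm : Monotone h) {Q : ℝ}
    (hQ : HasDerivAt h Q 0) : 0 ≤ Q := by
  have ht := hasDerivAt_iff_tendsto_slope.mp hQ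
  refine ge_of_tendsto ht ?_
  filter_upwards [self_mem_nhdsWithin] with y hy
  have hy0 : y ≠ 0 := hy
  rw [slope_def_field]
  rcases lt_or_gt_of_ne hy0 with h1 | h1
  · exact div_nonneg_iff.mpr (Or.inr ⟨by simpa [sub_nonpos] using hm h1.le, by linarith⟩)
  · exact div_nonneg (by simpa [sub_nonneg] using hm h1.le) (by linarith)

private lemma nonpos_of_deriv_nonpos {u u' : ℝ → ℝ} (hu : ∀ s, HasDerivAt u (u' s) s)
    (h0 : u 0 = 0) (hneg : ∀ s ∈ Set.Ioo (0:ℝ) 1, u' s ≤ 0) {t : ℝ} (ht0 : 0 ≤ t) (ht1 : t ≤ 1) :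
    u t ≤ 0 := by
  have hanti : AntitoneOn u (Set.Icc 0 1) := by
    apply antitoneOn_of_deriv_nonpos (convex_Icc 0 1)
    · exact fun s _ => ((hu s).differentiableAt.continuousAt).continuousWithinAt
    · exact fun s _ => ((hu s).differentiableAt).differentiableWithinAt
    · intro s hs
      rw [interior_Icc] at hs
      rw [(hu s).deriv]
      exact hneg s hs
  have := hanti (Set.left_mem_Icc.mpr zero_le_one) ⟨ht0, ht1⟩ ht0
  rwa [h0] at this

end Aux

theorem abpg_sufficient_decrease {n : ℕ}
    (φ f g : EuclideanSpace ℝ (Fin n) → ℝ) (σ : ℝ) (hσ : 0 < σ)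
    (hφ : ContDiff ℝ 2 φ)
    (hφsc : ConvexOn ℝ Set.univ (fun y => φ y - σ / 2 * ‖y‖ ^ 2))
    (hf : ContDiff ℝ 1 f) (hg : ConvexOn ℝ Set.univ g)
    (Ψ : EuclideanSpace ℝ (Fin n) → ℝ) (hΨ : Ψ = fun y => f y + g y)
    (L : ℝ) (hL : 0 < L)
    (hsmad₁ : ConvexOn ℝ Set.univ (fun y => L * φ y - f y))
    (hsmad₂ : ConvexOn ℝ Set.univ (fun y => L * φ y + f y))
    (x : EuclideanSpace ℝ (Fin n)) (lam : ℝ) (hlam : 0 < lam)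
    (α : ℝ) (hα : α ∈ Set.Ioo (0 : ℝ) 1)
    (d : EuclideanSpace ℝ (Fin n))
    (hd : ∀ u : EuclideanSpace ℝ (Fin n),
      ⟪gradient f x, d⟫ + g (x + d) + (1 / (2 * lam)) * ⟪hessApply φ x d, d⟫ ≤
      ⟪gradient f x, u⟫ + g (x + u) + (1 / (2 * lam)) * ⟪hessApply φ x u, u⟫)
    (β : ℝ) (hβ : 0 < β)
    (hβbound : ∀ s ∈ Set.Icc (0 : ℝ) 1,
      ⟪hessApply φ (x + s • d) d, d⟫ ≤ β * ⟪hessApply φ x d, d⟫)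
    (t : ℝ) (ht0 : 0 < t) (ht : t ≤ min 1 ((1 - α) / (β * lam * L))) :
    Ψ (x + t • d) ≤ Ψ x + α * t * (⟪gradient f x, d⟫ + g (x + d) - g x) := by
  obtain ⟨hα0, hα1⟩ := hα
  have ht1 : t ≤ 1 := le_trans ht (min_le_left _ _)
  have htc : β * lam * L * t ≤ 1 - α := by
    have hpos : 0 < β * lam * L := by positivity
    have := le_trans ht (min_le_right _ _)
    calc β * lam * L * t ≤ β * lam * L * ((1 - α) / (β * lam * L)) := by
          exact mul_le_mul_of_nonneg_left this hpos.le
      _ = 1 - α := by field_simp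
  have hφdiff : Differentiable ℝ φ := hφ.differentiable (by norm_num)
  have hfdiff : Differentiable ℝ f := hf.differentiable (by norm_num)
  set Q : ℝ := ⟪hessApply φ x d, d⟫ with hQdef
  set F : ℝ := ⟪gradient f x, d⟫ with hFdef
  have hx0 : x + (0:ℝ) • d = x := by simp
  -- step 0 : from optimality at u = 0
  have h0 : F + g (x + d) + (1 / (2 * lam)) * Q ≤ g x := by
    have h1 := hd 0
    simp only [inner_zero_right, add_zero, mul_zero, zero_add] at h1
    exact h1
  -- convexity of φ
  have hφconv : ConvexOn ℝ Set.univ φ := by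
    have hsc : StrongConvexOn Set.univ σ φ := strongConvexOn_iff_convex.mpr hφsc
    exact hsc.convexOn fun r => by positivity
  -- Q ≥ 0
  have hQ0 : 0 ≤ Q := by
    have hq : ConvexOn ℝ Set.univ (fun s : ℝ => φ (x + s • d)) := line_convex φ hφconv x d
    have hqd : ∀ s : ℝ, DifferentiableAt ℝ (fun s : ℝ => φ (x + s • d)) s :=
      fun s => (line_deriv1 φ hφdiff x d s).differentiableAt
    have hmono : Monotone (fun s : ℝ => ⟪gradient φ (x + s • d), d⟫) := by
      have h1 : MonotoneOn (deriv (fun s : ℝ => φ (x + s • d))) Set.univ :=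
        hq.monotoneOn_deriv fun s _ => hqd s
      have h2 : deriv (fun s : ℝ => φ (x + s • d)) =
          fun s : ℝ => ⟪gradient φ (x + s • d), d⟫ :=
        funext fun s => (line_deriv1 φ hφdiff x d s).deriv
      rw [h2] at h1
      exact monotoneOn_univ.mp h1
    have hQ' : HasDerivAt (fun s : ℝ => ⟪gradient φ (x + s • d), d⟫) Q 0 := by
      have := line_deriv2 φ hφ x d 0
      rwa [hx0] at this
    exact deriv_nonneg_of_monotone hmono hQ'
  -- Taylor-type bound : A ≤ β * Q * t^2 / 2
  set A : ℝ := φ (x + t • d) - φ x - t * ⟪gradient φ x, d⟫ with hAdef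
  have hA : A ≤ β * Q * t ^ 2 / 2 := by
    have hple : ∀ s ∈ Set.Icc (0:ℝ) 1,
        (fun s : ℝ => ⟪gradient φ (x + s • d), d⟫ - ⟪gradient φ x, d⟫ - β * Q * s) s ≤ 0 := by
      intro s hs
      refine nonpos_of_deriv_nonpos
        (u := fun s : ℝ => ⟪gradient φ (x + s • d), d⟫ - ⟪gradient φ x, d⟫ - β * Q * s)
        (u' := fun s : ℝ => ⟪hessApply φ (x + s • d) d, d⟫ - β * Q)
        ?_ ?_ ?_ hs.1 hs.2
      · intro s
        have h1 := ((line_deriv2 φ hφ x d s).sub_const ⟪gradient φ x, d⟫).sub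
          (HasDerivAt.const_mul (β * Q) (hasDerivAt_id' (x := s)))
        exact h1.congr_deriv (by ring)
      · simp [hx0]
      · intro s hs
        have := hβbound s ⟨hs.1.le, hs.2.le⟩
        show ⟪hessApply φ (x + s • d) d, d⟫ - β * Q ≤ 0
        linarith
    have hrt : (fun s : ℝ => φ (x + s • d) - φ x - ⟪gradient φ x, d⟫ * s
        - β * Q / 2 * s ^ 2) t ≤ 0 := by
      refine nonpos_of_deriv_nonpos
        (u := fun s : ℝ => φ (x + s • d) - φ x - ⟪gradient φ x, d⟫ * s
          - β * Q / 2 * s ^ 2)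
        (u' := fun s : ℝ => ⟪gradient φ (x + s • d), d⟫ - ⟪gradient φ x, d⟫ - β * Q * s)
        ?_ ?_ ?_ ht0.le ht1
      · intro s
        have h1 := (((line_deriv1 φ hφdiff x d s).sub_const (φ x)).sub
          (HasDerivAt.const_mul ⟪gradient φ x, d⟫ (hasDerivAt_id' (x := s)))).sub
          (HasDerivAt.const_mul (β * Q / 2) (hasDerivAt_pow 2 s))
        exact h1.congr_deriv (by push_cast; ring)
      · simp [hx0]
      · intro s hs
        have := hple s ⟨hs.1.le, hs.2.le⟩
        simpa using this
    simp only at hrt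
    rw [hAdef]
    linarith [hrt]
  -- descent lemma from L-smad
  have hfb : f (x + t • d) ≤ f x + t * F + L * A := by
    have hGconv : ConvexOn ℝ Set.univ (fun s : ℝ => L * φ (x + s • d) - f (x + s • d)) :=
      line_convex _ hsmad₁ x d
    have hG' : ∀ s : ℝ, HasDerivAt (fun s : ℝ => L * φ (x + s • d) - f (x + s • d))
        (L * ⟪gradient φ (x + s • d), d⟫ - ⟪gradient f (x + s • d), d⟫) s :=
      fun s => ((line_deriv1 φ hφdiff x d s).const_mul L).sub (line_deriv1 f hfdiff x d s)
    have hslope := hGconv.le_slope_of_hasDerivAt (Set.mem_univ 0) (Set.mem_univ t)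
      ht0 (hG' 0)
    rw [slope_def_field, hx0] at hslope
    have h2 := (le_div_iff₀ (by linarith : (0:ℝ) < t - 0)).mp hslope
    rw [hAdef]
    nlinarith [h2]
  -- convexity of g along the segment
  have hgt : g (x + t • d) ≤ (1 - t) * g x + t * g (x + d) := by
    have key : (1 - t) • x + t • (x + d) = x + t • d := by
      rw [smul_add, sub_smul, one_smul]
      abel
    have := hg.2 (Set.mem_univ x) (Set.mem_univ (x + d)) (by linarith : (0:ℝ) ≤ 1 - t)
      ht0.le (by ring)
    rw [key] at this
    simpa using this
  -- final arithmetic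
  set Δ : ℝ := F + g (x + d) - g x with hΔdef
  have hΔle : Δ ≤ -(1 / (2 * lam)) * Q := by
    simp only [hΔdef]; linarith
  have hkey : L * A ≤ (1 - α) * t * (-Δ) := by
    have c3 : 0 ≤ t * (Q / (2 * lam)) :=
      mul_nonneg ht0.le (div_nonneg hQ0 (by linarith))
    have m1 : L * A ≤ L * (β * Q * t ^ 2 / 2) := mul_le_mul_of_nonneg_left hA hL.le
    have m2 : L * (β * Q * t ^ 2 / 2) ≤ (1 - α) * (t * (Q / (2 * lam))) := by
      have e : L * (β * Q * t ^ 2 / 2) = (β * lam * L * t) * (t * (Q / (2 * lam))) := by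
        field_simp
      rw [e]
      exact mul_le_mul_of_nonneg_right htc c3
    have m3 : (1 - α) * (t * (Q / (2 * lam))) ≤ (1 - α) * t * (-Δ) := by
      have ha1 : 0 ≤ (1 - α) * t := mul_nonneg (by linarith) ht0.le
      have hQle : Q / (2 * lam) ≤ -Δ := by
        have : -(1 / (2 * lam)) * Q = -(Q / (2 * lam)) := by field_simp
        rw [this] at hΔle
        linarith
      calc (1 - α) * (t * (Q / (2 * lam))) = ((1 - α) * t) * (Q / (2 * lam)) := by ring
        _ ≤ ((1 - α) * t) * (-Δ) := mul_le_mul_of_nonneg_left hQle ha1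
        _ = (1 - α) * t * (-Δ) := by ring
    exact le_trans m1 (le_trans m2 m3)
  subst hΨ
  simp only
  have hexp : t * Δ = t * F + t * g (x + d) - t * g x := by rw [hΔdef]; ring
  have hexp2 : (1 - α) * t * (-Δ) = α * t * Δ - t * Δ := by ring
  show f (x + t • d) + g (x + t • d) ≤ f x + g x + α * t * Δ
  nlinarith [hfb, hgt, hkey, hexp, hexp2]
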